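/- Let p be a non-constant real polynomial of degree d, and let k, m > 0. Then the set R = {x ∈ ℝ : |p(x)| ≤ k and |p'(x)| ≥ m} is a union of at most 2d pairwise disjoint closed intervals. -/

import Mathlib

open Polynomial Set Filter

private lemma isClosed_ccIn {s : Set ℝ} (hs : IsClosed s) (x : ℝ) :
    IsClosed (connectedComponentIn s x) := by
  by_cases hx : x ∈ s
  · refine isClosed_of_closure_subset ?_
    exact isPreconnected_connectedComponentIn.closure.subset_connectedComponentIn
      (subset_closure (mem_connectedComponentIn hx))
      (closure_minimal (connectedComponentIn_subset s x) hs)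
  · rw [connectedComponentIn_eq_empty hx]; exact isClosed_empty

theorem stmt_0 (p : Polynomial ℝ) (hp : 0 < p.natDegree) (k m : ℝ) (hk : 0 < k) (hm : 0 < m) :
    ∃ (L : ℕ) (a b : Fin L → ℝ), L ≤ 2 * p.natDegree ∧
      (∀ i, a i ≤ b i) ∧
      (Pairwise fun i j => Disjoint (Icc (a i) (b i)) (Icc (a j) (b j))) ∧
      {x : ℝ | |p.eval x| ≤ k ∧ m ≤ |p.derivative.eval x|} = ⋃ i, Icc (a i) (b i) := by
  classical
  set R : Set ℝ := {x : ℝ | |p.eval x| ≤ k ∧ m ≤ |p.derivative.eval x|} with hRdef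
  set U : Set ℝ := {x : ℝ | m ≤ |p.derivative.eval x|} with hUdef
  set q : Polynomial ℝ := p.derivative * p.derivative - C (m * m) with hqdef
  have hcont : Continuous fun x : ℝ => eval x p := p.continuous
  have hcont' : Continuous fun x : ℝ => eval x p.derivative := p.derivative.continuous
  have hUcl : IsClosed U := isClosed_le continuous_const (continuous_abs.comp hcont')
  have hRcl : IsClosed R := by
    have : R = {x : ℝ | |p.eval x| ≤ k} ∩ U := by ext z; simp [hRdef, hUdef, and_comm]
    rw [this]
    exact ((isClosed_le (continuous_abs.comp hcont) continuous_const)).inter hUcl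
  have hRU : R ⊆ U := fun z hz => hz.2
  have hRbdd : Bornology.IsBounded R := by
    have hdeg : 0 < p.degree := natDegree_pos_iff_degree_pos.mp hp
    have htend : Tendsto (fun x : ℝ => |eval x p|) (cocompact ℝ) atTop := by
      have hz : Tendsto (abs ∘ (id : ℝ → ℝ)) (cocompact ℝ) atTop := by
        convert (tendsto_norm_cocompact_atTop : Tendsto norm (cocompact ℝ) atTop) using 1
        ext x; simp [Real.norm_eq_abs]
      exact p.tendsto_abv_atTop abs hdeg hz
    obtain ⟨K, hKc, hK⟩ := (Filter.hasBasis_cocompact.eventually_iff).mp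
      (htend.eventually_gt_atTop k)
    refine hKc.isBounded.subset fun z hz => ?_
    by_contra hzK
    exact absurd hz.1 (not_le.mpr (hK hzK))
  -- ordConnected components of U
  have hUord : ∀ x : ℝ, OrdConnected (connectedComponentIn U x) := fun x =>
    isPreconnected_connectedComponentIn.ordConnected
  -- sign lemma and bridge
  have hIccR : ∀ x y : ℝ, x ∈ R → y ∈ R → x ≤ y →
      y ∈ connectedComponentIn U x → Icc x y ⊆ R := by
    intro x y hx hy hxy hyJ z hz
    have hxJ : x ∈ connectedComponentIn U x := mem_connectedComponentIn hx.2
    have hIccJ : Icc x y ⊆ connectedComponentIn U x := (hUord x).out hxJ hyJ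
    have hzU : z ∈ U := connectedComponentIn_subset U x (hIccJ hz)
    refine ⟨?_, hzU⟩
    have hne : ∀ w ∈ Icc x y, eval w p.derivative ≠ 0 := by
      intro w hw h0
      have : m ≤ |eval w p.derivative| := connectedComponentIn_subset U x (hIccJ hw)
      rw [h0, abs_zero] at this; linarith
    have hsign : (∀ w ∈ Icc x y, 0 < eval w p.derivative) ∨
        (∀ w ∈ Icc x y, eval w p.derivative < 0) := by
      have hxm : x ∈ Icc x y := ⟨le_refl x, hxy⟩
      rcases (hne x hxm).lt_or_gt with hneg | hpos
      · right; intro w hw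
        rcases (hne w hw).lt_or_gt with h | h
        · exact h
        · exfalso
          have h0 : (0 : ℝ) ∈ uIcc (eval x p.derivative) (eval w p.derivative) := by
            rw [Set.mem_uIcc]; left; exact ⟨hneg.le, h.le⟩
          obtain ⟨w0, hw0, hw0'⟩ := intermediate_value_uIcc hcont'.continuousOn h0
          exact hne w0 (uIcc_subset_Icc hxm hw hw0) hw0'
      · left; intro w hw
        rcases (hne w hw).lt_or_gt with h | h
        · exfalso
          have h0 : (0 : ℝ) ∈ uIcc (eval x p.derivative) (eval w p.derivative) := by
            rw [Set.mem_uIcc]; right; exact ⟨h.le, hpos.le⟩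
          obtain ⟨w0, hw0, hw0'⟩ := intermediate_value_uIcc hcont'.continuousOn h0
          exact hne w0 (uIcc_subset_Icc hxm hw hw0) hw0'
        · exact h
    have hxk : |eval x p| ≤ k := hx.1
    have hyk : |eval y p| ≤ k := hy.1
    show |eval z p| ≤ k
    rw [abs_le] at hxk hyk ⊢
    rcases hsign with hpos | hneg
    · have hmono : StrictMonoOn (fun t => eval t p) (Icc x y) := by
        refine strictMonoOn_of_deriv_pos (convex_Icc x y) hcont.continuousOn ?_
        intro w hw
        rw [Polynomial.deriv]
        exact hpos w (interior_subset hw)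
      have h1 : eval x p ≤ eval z p := hmono.monotoneOn ⟨le_refl x, hxy⟩ hz hz.1
      have h2 : eval z p ≤ eval y p := hmono.monotoneOn hz ⟨hxy, le_refl y⟩ hz.2
      exact ⟨by linarith [hxk.1], by linarith [hyk.2]⟩
    · have hanti : StrictAntiOn (fun t => eval t p) (Icc x y) := by
        refine strictAntiOn_of_deriv_neg (convex_Icc x y) hcont.continuousOn ?_
        intro w hw
        rw [Polynomial.deriv]
        exact hneg w (interior_subset hw)
      have h1 : eval z p ≤ eval x p := hanti.antitoneOn ⟨le_refl x, hxy⟩ hz hz.1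
      have h2 : eval y p ≤ eval z p := hanti.antitoneOn hz ⟨hxy, le_refl y⟩ hz.2
      exact ⟨by linarith [hyk.1], by linarith [hxk.2]⟩
  -- same U-component implies same R-component
  have hcompEq : ∀ x y : ℝ, x ∈ R → y ∈ R →
      connectedComponentIn U x = connectedComponentIn U y →
      connectedComponentIn R x = connectedComponentIn R y := by
    have key : ∀ x y : ℝ, x ∈ R → y ∈ R → x ≤ y →
        connectedComponentIn U x = connectedComponentIn U y →
        connectedComponentIn R x = connectedComponentIn R y := by
      intro x y hx hy hxy hJ
      have hyJ : y ∈ connectedComponentIn U x := by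
        rw [hJ]; exact mem_connectedComponentIn hy.2
      have hIcc : Icc x y ⊆ R := hIccR x y hx hy hxy hyJ
      have hyC : y ∈ connectedComponentIn R x :=
        isPreconnected_Icc.subset_connectedComponentIn ⟨le_refl x, hxy⟩ hIcc ⟨hxy, le_refl y⟩
      exact connectedComponentIn_eq hyC
    intro x y hx hy hJ
    rcases le_total x y with h | h
    · exact key x y hx hy h hJ
    · exact (key y x hy hx h hJ.symm).symm
  -- infimum of a bounded-below U-component is a root of q
  have hroot : ∀ x : ℝ, x ∈ U → BddBelow (connectedComponentIn U x) →
      sInf (connectedComponentIn U x) ∈ q.roots.toFinset := by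
    intro x hxU hbdd
    have hxJ : x ∈ connectedComponentIn U x := mem_connectedComponentIn hxU
    have hJne : (connectedComponentIn U x).Nonempty := ⟨x, hxJ⟩
    have hJcl : IsClosed (connectedComponentIn U x) := isClosed_ccIn hUcl x
    set a := sInf (connectedComponentIn U x) with hadef
    have haJ : a ∈ connectedComponentIn U x := hJcl.csInf_mem hJne hbdd
    have haU : a ∈ U := connectedComponentIn_subset U x haJ
    have haLB : ∀ w ∈ connectedComponentIn U x, a ≤ w := fun w hw => csInf_le hbdd hw
    have hle : |eval a p.derivative| ≤ m := by
      by_contra hlt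
      push_neg at hlt
      have hopen : IsOpen {w : ℝ | m < |eval w p.derivative|} :=
        isOpen_lt continuous_const (continuous_abs.comp hcont')
      obtain ⟨ε, hε, hball⟩ := Metric.isOpen_iff.mp hopen a hlt
      set S := Ioc (a - ε) a ∪ connectedComponentIn U x with hSdef
      have hSU : S ⊆ U := by
        rintro w (hw | hw)
        · have : w ∈ Metric.ball a ε := by
            rw [Metric.mem_ball, Real.dist_eq, abs_lt]
            constructor <;> [linarith [hw.1]; linarith [hw.2]]
          exact le_of_lt (show m < |eval w (derivative p)| from hball this)
        · exact connectedComponentIn_subset U x hw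
      have hSord : OrdConnected S := by
        constructor
        rintro u (hu | hu) v (hv | hv) w hw
        · exact Or.inl ⟨lt_of_lt_of_le hu.1 hw.1, le_trans hw.2 hv.2⟩
        · rcases le_total w a with hwa | hwa
          · exact Or.inl ⟨lt_of_lt_of_le hu.1 hw.1, hwa⟩
          · exact Or.inr ((hUord x).out haJ hv ⟨hwa, hw.2⟩)
        · exact Or.inr ((hUord x).out hu haJ ⟨hw.1, hw.2.trans hv.2⟩)
        · exact Or.inr ((hUord x).out hu hv hw)
      have hSsub : S ⊆ connectedComponentIn U x :=
        hSord.isPreconnected.subset_connectedComponentIn (Or.inr hxJ) hSU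
      have hmem : a - ε / 2 ∈ S := Or.inl ⟨by linarith, by linarith⟩
      have := haLB _ (hSsub hmem)
      linarith
    have heq : |eval a p.derivative| = m := le_antisymm hle haU
    have hq0 : q ≠ 0 := by
      intro h0
      have hUuniv : U = univ := by
        refine eq_univ_of_forall fun w => ?_
        have h1 : eval w q = 0 := by rw [h0]; simp
        rw [hqdef] at h1
        simp only [eval_sub, eval_mul, eval_C] at h1
        show m ≤ |eval w (derivative p)|
        nlinarith [abs_nonneg (eval w (derivative p)), sq_abs (eval w (derivative p))]
      have hJuniv : connectedComponentIn U x = univ := by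
        rw [hUuniv, connectedComponentIn_univ, PreconnectedSpace.connectedComponent_eq_univ]
      rw [hJuniv] at hbdd
      obtain ⟨c, hc⟩ := hbdd
      have h1 := hc (mem_univ (c - 1))
      linarith
    rw [Multiset.mem_toFinset, mem_roots hq0]
    show eval a q = 0
    rw [hqdef]
    simp only [eval_sub, eval_mul, eval_C]
    nlinarith [sq_abs (eval a (derivative p))]
  -- uniqueness of the unbounded-below component
  have hnone : ∀ x y : ℝ, x ∈ U → y ∈ U →
      ¬BddBelow (connectedComponentIn U x) → ¬BddBelow (connectedComponentIn U y) →
      connectedComponentIn U x = connectedComponentIn U y := by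
    intro x y hx hy h1 h2
    rw [not_bddBelow_iff] at h1 h2
    obtain ⟨w1, hw1J, hw1⟩ := h1 y
    obtain ⟨w2, hw2J, hw2⟩ := h2 w1
    have hyJ : y ∈ connectedComponentIn U y := mem_connectedComponentIn hy
    have hw1J2 : w1 ∈ connectedComponentIn U y :=
      (hUord y).out hw2J hyJ ⟨hw2.le, hw1.le⟩
    exact (connectedComponentIn_eq hw1J).trans (connectedComponentIn_eq hw1J2).symm
  -- enumerate the connected components of R
  set T : Finset ℝ := q.roots.toFinset with hTdef
  set 𝒞 : Set (Set ℝ) := (fun x => connectedComponentIn R x) '' R with h𝒞def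
  have hrepex : ∀ C : 𝒞, ∃ x, x ∈ R ∧ connectedComponentIn R x = (C : Set ℝ) := by
    intro C
    obtain ⟨x, hx, hxC⟩ := C.2
    exact ⟨x, hx, hxC⟩
  let rep : 𝒞 → ℝ := fun C => (hrepex C).choose
  have hrepR : ∀ C : 𝒞, rep C ∈ R := fun C => (hrepex C).choose_spec.1
  have hrepC : ∀ C : 𝒞, connectedComponentIn R (rep C) = (C : Set ℝ) := fun C =>
    (hrepex C).choose_spec.2
  let g : 𝒞 → Option {r : ℝ // r ∈ T} := fun C =>
    if h : BddBelow (connectedComponentIn U (rep C)) then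
      some ⟨sInf (connectedComponentIn U (rep C)), hroot (rep C) (hrepR C).2 h⟩
    else none
  have hginj : Function.Injective g := by
    intro C1 C2 hg
    have hJ : connectedComponentIn U (rep C1) = connectedComponentIn U (rep C2) := by
      by_cases h1 : BddBelow (connectedComponentIn U (rep C1))
      · by_cases h2 : BddBelow (connectedComponentIn U (rep C2))
        · have hinf : sInf (connectedComponentIn U (rep C1)) =
              sInf (connectedComponentIn U (rep C2)) := by
            simp only [g, dif_pos h1, dif_pos h2, Option.some.injEq, Subtype.mk.injEq] at hg
            exact hg
          have hcl1 := isClosed_ccIn hUcl (rep C1)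
          have hcl2 := isClosed_ccIn hUcl (rep C2)
          have ha1 : sInf (connectedComponentIn U (rep C1)) ∈
              connectedComponentIn U (rep C1) :=
            hcl1.csInf_mem ⟨_, mem_connectedComponentIn (hrepR C1).2⟩ h1
          have ha2 : sInf (connectedComponentIn U (rep C1)) ∈
              connectedComponentIn U (rep C2) := by
            rw [hinf]
            exact hcl2.csInf_mem ⟨_, mem_connectedComponentIn (hrepR C2).2⟩ h2
          exact (connectedComponentIn_eq ha1).trans (connectedComponentIn_eq ha2).symm
        · simp only [g, dif_pos h1, dif_neg h2, reduceCtorEq] at hg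
      · by_cases h2 : BddBelow (connectedComponentIn U (rep C2))
        · simp only [g, dif_neg h1, dif_pos h2, reduceCtorEq] at hg
        · exact hnone _ _ (hrepR C1).2 (hrepR C2).2 h1 h2
    have hcc := hcompEq _ _ (hrepR C1) (hrepR C2) hJ
    exact Subtype.ext ((hrepC C1).symm.trans (hcc.trans (hrepC C2)))
  haveI : Finite 𝒞 := Finite.of_injective g hginj
  haveI : Fintype 𝒞 := Fintype.ofFinite 𝒞
  let e : Fin (Fintype.card 𝒞) ≃ 𝒞 := (Fintype.equivFin 𝒞).symm
  have hCprops : ∀ C : 𝒞,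
      (C : Set ℝ) = Icc (sInf (C : Set ℝ)) (sSup (C : Set ℝ)) ∧ (C : Set ℝ).Nonempty := by
    intro C
    obtain ⟨x, hxR, hxC⟩ := hrepex C
    have hconn : IsConnected (C : Set ℝ) := by
      rw [← hxC]; exact isConnected_connectedComponentIn_iff.mpr hxR
    have hsubR : (C : Set ℝ) ⊆ R := by
      rw [← hxC]; exact connectedComponentIn_subset R x
    have hclosed : IsClosed (C : Set ℝ) := by
      rw [← hxC]; exact isClosed_ccIn hRcl x
    have hcomp : IsCompact (C : Set ℝ) :=
      Metric.isCompact_of_isClosed_isBounded hclosed (hRbdd.subset hsubR)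
    exact ⟨eq_Icc_of_connected_compact hconn hcomp, hconn.nonempty⟩
  refine ⟨Fintype.card 𝒞, fun i => sInf ((e i : Set ℝ)), fun i => sSup ((e i : Set ℝ)),
    ?_, ?_, ?_, ?_⟩
  · have h1 : Fintype.card 𝒞 ≤ Fintype.card (Option {r : ℝ // r ∈ T}) :=
      Fintype.card_le_of_injective g hginj
    rw [Fintype.card_option, Fintype.card_coe] at h1
    have h2 : T.card ≤ q.natDegree := le_trans (q.roots.toFinset_card_le) q.card_roots'
    have h3 : q.natDegree ≤ 2 * (p.natDegree - 1) := by
      rw [hqdef]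
      refine le_trans (natDegree_sub_le _ _) ?_
      rw [natDegree_C]
      have hmul : (p.derivative * p.derivative).natDegree ≤
          p.derivative.natDegree + p.derivative.natDegree := natDegree_mul_le
      have hd := natDegree_derivative_le p
      simp only [max_le_iff]
      exact ⟨by omega, Nat.zero_le _⟩
    omega
  · intro i
    exact nonempty_Icc.mp ((hCprops (e i)).1 ▸ (hCprops (e i)).2)
  · intro i j hij
    rw [← (hCprops (e i)).1, ← (hCprops (e j)).1, Set.disjoint_left]
    intro z hz1 hz2
    have e1 : connectedComponentIn R z = (e i : Set ℝ) := by
      rw [← hrepC (e i)] at hz1 ⊢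
      exact (connectedComponentIn_eq hz1).symm
    have e2 : connectedComponentIn R z = (e j : Set ℝ) := by
      rw [← hrepC (e j)] at hz2 ⊢
      exact (connectedComponentIn_eq hz2).symm
    exact hij (e.injective (Subtype.ext (e1.symm.trans e2)))
  · ext z
    simp only [Set.mem_iUnion]
    constructor
    · intro hz
      have hmem : connectedComponentIn R z ∈ 𝒞 := ⟨z, hz, rfl⟩
      refine ⟨e.symm ⟨_, hmem⟩, ?_⟩
      rw [← (hCprops (e (e.symm ⟨_, hmem⟩))).1, e.apply_symm_apply]
      exact mem_connectedComponentIn hz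
    · rintro ⟨i, hi⟩
      rw [← (hCprops (e i)).1] at hi
      obtain ⟨x, hxR, hxC⟩ := (e i).2
      rw [← hxC] at hi
      exact connectedComponentIn_subset R x hi
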